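/- For the random walk with p_c = ρ/(c+ρ), q_c = c/(c+ρ), the excursion above level c started at c+1 reaches height at least h+1 above c with probability 1/∑_{r=0}^{h} (c+1)_r/ρ^r, where (x)_r denotes the rising factorial. -/

import Mathlib

/-- Rising factorial `(x)_n = x(x+1)⋯(x+n-1)` over the reals. -/
def risingFactorial (x : ℝ) (n : ℕ) : ℝ := ∏ i ∈ Finset.range n, (x + i)

/-- The excursion above level `c` started at `c+1` reaches height at least `h+1`
with probability `1/∑_{r=0}^h (c+1)_r/ρ^r`.  The probability of hitting
`u = c+h+1` before `ℓ = c` is characterized by the harmonic equations of the walk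
with `p_b = ρ/(b+ρ)`, `q_b = b/(b+ρ)`. -/
theorem excursion_height (ρ : ℝ) (hρ : 0 < ρ) (c h : ℕ)
    (f : ℕ → ℝ) (hbl : f c = 0) (hbu : f (c + h + 1) = 1)
    (hhar : ∀ b : ℕ, c < b → b < c + h + 1 →
      f b = (ρ / (b + ρ)) * f (b + 1) + ((b : ℝ) / (b + ρ)) * f (b - 1)) :
    f (c + 1) = (∑ r ∈ Finset.range (h + 1), risingFactorial ((c : ℝ) + 1) r / ρ ^ r)⁻¹ := by
  have hρ' : ρ ≠ 0 := ne_of_gt hρ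
  -- differences follow the rising factorial recursion
  have diff : ∀ k, k ≤ h →
      f (c + k + 1) - f (c + k) = f (c + 1) * (risingFactorial ((c : ℝ) + 1) k / ρ ^ k) := by
    intro k hk
    induction k with
    | zero => simp [risingFactorial, hbl]
    | succ k ih =>
      have hk' : k ≤ h := Nat.le_of_succ_le hk
      have ih' := ih hk'
      set b := c + k + 1 with hb
      have hb1 : c < b := by omega
      have hb2 : b < c + h + 1 := by omega
      have hhb := hhar b hb1 hb2
      have hbpos : (0:ℝ) < (b : ℝ) + ρ := by positivity
      have key : ρ * (f (b + 1) - f b) = (b : ℝ) * (f b - f (b - 1)) := by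
        have h1 : ((b : ℝ) + ρ) * f b = ρ * f (b + 1) + (b : ℝ) * f (b - 1) := by
          rw [hhb]; field_simp
        nlinarith [h1]
      have hbm : b - 1 = c + k := by omega
      rw [hbm] at key
      have heq : f (b + 1) - f b = ((b : ℝ) / ρ) * (f b - f (c + k)) := by
        field_simp
        linarith [key]
      have hbshow : f (c + (k+1) + 1) - f (c + (k+1)) = f (b + 1) - f b := by
        rfl
      rw [hbshow, heq, ih']
      have hbcast : ((b : ℕ) : ℝ) = ((c : ℝ) + 1) + k := by
        rw [hb]; push_cast; ring
      rw [hbcast]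
      rw [show risingFactorial ((c:ℝ)+1) (k+1)
            = risingFactorial ((c:ℝ)+1) k * (((c:ℝ)+1) + k) from
          Finset.prod_range_succ _ _]
      field_simp
      ring
  -- telescoping sum
  have tele : ∑ k ∈ Finset.range (h + 1), (f (c + (k+1)) - f (c + k))
      = f (c + (h + 1)) - f (c + 0) := Finset.sum_range_sub (fun k => f (c + k)) (h+1)
  have hsum : f (c + 1) * (∑ r ∈ Finset.range (h + 1),
      risingFactorial ((c : ℝ) + 1) r / ρ ^ r) = 1 := by
    rw [Finset.mul_sum]
    have : ∀ k ∈ Finset.range (h + 1),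
        f (c + 1) * (risingFactorial ((c : ℝ) + 1) k / ρ ^ k)
          = f (c + (k+1)) - f (c + k) := by
      intro k hk
      rw [Finset.mem_range, Nat.lt_succ_iff] at hk
      rw [← diff k hk, show c + (k+1) = c + k + 1 from by omega]
    rw [Finset.sum_congr rfl this, tele]
    have : c + (h + 1) = c + h + 1 := by omega
    rw [this, hbu, Nat.add_zero, hbl]
    norm_num
  exact eq_inv_of_mul_eq_one_left hsum
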